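/- arXiv:2206.01503 — 2 statements merged into one kernel-verified Lean document; each statement's English description precedes it below -/
import Mathlib

section
/- With the same setup, 0 ∈ W₀(A⁰) if and only if dist(A, C^d I) = sup{ |⟨Ax, y⟩| : x ∈ H, y ∈ H^d, ‖x‖ = ‖y‖ = 1, ⟨x, y_j⟩ = 0 for all 1 ≤ j ≤ d }. -/
open Filter Topology

variable {H : Type*} [NormedAddCommGroup H] [InnerProductSpace ℂ H] [CompleteSpace H]

/-- The norm `‖A‖ = ‖∑ⱼ Aⱼ* Aⱼ‖^{1/2}` of a tuple of operators viewed as an operator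
`H → H^d`. -/
noncomputable def opTupNorm {d : ℕ} (A : Fin d → H →L[ℂ] H) : ℝ :=
  Real.sqrt ‖∑ j, ContinuousLinearMap.adjoint (A j) * A j‖

/-- `var_x(A) = ‖Ax‖² - ∑ⱼ |⟨x, Aⱼx⟩|²`. -/
noncomputable def opVar {d : ℕ} (A : Fin d → H →L[ℂ] H) (x : H) : ℝ :=
  (∑ j, ‖A j x‖ ^ 2) - ∑ j, ‖(inner ℂ x (A j x) : ℂ)‖ ^ 2

/-- The joint maximal numerical range `W₀(A)`: all limits of
`(⟨xₙ, A₁xₙ⟩, …, ⟨xₙ, A_d xₙ⟩)` along sequences of unit vectors `xₙ` with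
`‖A xₙ‖ → ‖A‖`. -/
def W0 {d : ℕ} (A : Fin d → H →L[ℂ] H) : Set (Fin d → ℂ) :=
  {lam | ∃ x : ℕ → H, (∀ n, ‖x n‖ = 1) ∧
    Tendsto (fun n => Real.sqrt (∑ j, ‖A j (x n)‖ ^ 2)) atTop (nhds (opTupNorm A)) ∧
    ∀ j, Tendsto (fun n => (inner ℂ (x n) (A j (x n)) : ℂ)) atTop (nhds (lam j))}

section aux

set_option linter.unusedSectionVars false

lemma rclike_ofReal_complex (r : ℝ) : (RCLike.ofReal r : ℂ) = Complex.ofReal r := rfl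

lemma inner_tup_self {d : ℕ} (B : Fin d → H →L[ℂ] H) (x : H) :
    (inner ℂ x ((∑ j, ContinuousLinearMap.adjoint (B j) * B j) x) : ℂ)
      = ((∑ j, ‖B j x‖ ^ 2 : ℝ) : ℂ) := by
  simp only [ContinuousLinearMap.sum_apply, inner_sum, ContinuousLinearMap.mul_apply,
    ContinuousLinearMap.adjoint_inner_right, inner_self_eq_norm_sq_to_K]
  norm_cast

lemma sum_sq_le_opTupNorm_sq {d : ℕ} (B : Fin d → H →L[ℂ] H) {x : H} (hx : ‖x‖ = 1) :
    ∑ j, ‖B j x‖ ^ 2 ≤ opTupNorm B ^ 2 := by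
  have h1 : opTupNorm B ^ 2 = ‖∑ j, ContinuousLinearMap.adjoint (B j) * B j‖ :=
    Real.sq_sqrt (norm_nonneg _)
  set T := ∑ j, ContinuousLinearMap.adjoint (B j) * B j with hT
  have h2 : (∑ j, ‖B j x‖ ^ 2 : ℝ) = Complex.re (inner ℂ x (T x) : ℂ) := by
    rw [inner_tup_self, Complex.ofReal_re]
  rw [h2, h1]
  calc Complex.re (inner ℂ x (T x) : ℂ) ≤ ‖(inner ℂ x (T x) : ℂ)‖ := Complex.re_le_norm _
    _ ≤ ‖x‖ * ‖T x‖ := by exact norm_inner_le_norm x (T x)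
    _ ≤ ‖T‖ := by
        rw [hx, one_mul]
        calc ‖T x‖ ≤ ‖T‖ * ‖x‖ := T.le_opNorm x
          _ = ‖T‖ := by rw [hx, mul_one]

lemma inner_sub_proj {d : ℕ} (B : Fin d → H →L[ℂ] H) (x : H) (j : Fin d) :
    (inner ℂ ((B j) x) ((inner ℂ x (B j x) : ℂ) • x) : ℂ)
      = ((‖(inner ℂ x (B j x) : ℂ)‖ ^ 2 : ℝ) : ℂ) := by
  rw [inner_smul_right, ← inner_conj_symm x (B j x), Complex.norm_conj, mul_comm,
    Complex.mul_conj, Complex.normSq_eq_norm_sq]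

lemma opVar_eq_sum {d : ℕ} (B : Fin d → H →L[ℂ] H) {x : H} (hx : ‖x‖ = 1) :
    opVar B x = ∑ j, ‖B j x - (inner ℂ x (B j x) : ℂ) • x‖ ^ 2 := by
  unfold opVar
  rw [← Finset.sum_sub_distrib]
  refine Finset.sum_congr rfl fun j _ => ?_
  have h : ‖B j x - (inner ℂ x (B j x) : ℂ) • x‖ ^ 2
      = ‖B j x‖ ^ 2 - 2 * Complex.re (inner ℂ (B j x) ((inner ℂ x (B j x) : ℂ) • x) : ℂ)
        + ‖(inner ℂ x (B j x) : ℂ) • x‖ ^ 2 := norm_sub_sq (𝕜 := ℂ) _ _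
  rw [h, inner_sub_proj B x, Complex.ofReal_re, norm_smul, hx, mul_one]
  ring

lemma opVar_nonneg {d : ℕ} (B : Fin d → H →L[ℂ] H) {x : H} (hx : ‖x‖ = 1) :
    0 ≤ opVar B x := by
  rw [opVar_eq_sum B hx]; exact Finset.sum_nonneg fun j _ => sq_nonneg _

lemma opVar_le_sum_sq {d : ℕ} (B : Fin d → H →L[ℂ] H) (x : H) :
    opVar B x ≤ ∑ j, ‖B j x‖ ^ 2 :=
  sub_le_self _ (Finset.sum_nonneg fun j _ => sq_nonneg _)

lemma abs_sum_inner_le_sqrt_opVar {d : ℕ} (B : Fin d → H →L[ℂ] H) {x : H} {y : Fin d → H}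
    (hx : ‖x‖ = 1) (hy : (∑ j, ‖y j‖ ^ 2) = 1) (hxy : ∀ j, (inner ℂ x (y j) : ℂ) = 0) :
    ‖∑ j, (inner ℂ (B j x) (y j) : ℂ)‖ ≤ Real.sqrt (opVar B x) := by
  set u := fun j => B j x - (inner ℂ x (B j x) : ℂ) • x with hu
  have key : ∀ j, (inner ℂ (B j x) (y j) : ℂ) = inner ℂ (u j) (y j) := by
    intro j
    simp [hu, inner_sub_left, inner_smul_left, hxy j]
  calc ‖∑ j, (inner ℂ (B j x) (y j) : ℂ)‖
      = ‖∑ j, (inner ℂ (u j) (y j) : ℂ)‖ := by simp_rw [key]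
    _ ≤ ∑ j, ‖(inner ℂ (u j) (y j) : ℂ)‖ := by
        exact norm_sum_le _ _
    _ ≤ ∑ j, ‖u j‖ * ‖y j‖ := Finset.sum_le_sum fun j _ => by
        exact norm_inner_le_norm _ _
    _ ≤ Real.sqrt (∑ j, ‖u j‖ ^ 2) * Real.sqrt (∑ j, ‖y j‖ ^ 2) := by
        have h := Finset.sum_mul_sq_le_sq_mul_sq Finset.univ (fun j => ‖u j‖) (fun j => ‖y j‖)
        have h2 : (0:ℝ) ≤ ∑ j, ‖u j‖ * ‖y j‖ :=
          Finset.sum_nonneg fun j _ => mul_nonneg (norm_nonneg _) (norm_nonneg _)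
        calc (∑ j, ‖u j‖ * ‖y j‖)
            = Real.sqrt ((∑ j, ‖u j‖ * ‖y j‖)^2) := (Real.sqrt_sq h2).symm
          _ ≤ Real.sqrt ((∑ j, ‖u j‖^2) * (∑ j, ‖y j‖^2)) := Real.sqrt_le_sqrt h
          _ = _ := Real.sqrt_mul (Finset.sum_nonneg fun j _ => sq_nonneg _) _
    _ = Real.sqrt (opVar B x) := by rw [hy, Real.sqrt_one, mul_one, opVar_eq_sum B hx]

lemma exists_y_of_pos_opVar {d : ℕ} (B : Fin d → H →L[ℂ] H) {x : H} (hx : ‖x‖ = 1)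
    (hv : 0 < opVar B x) :
    ∃ y : Fin d → H, (∑ j, ‖y j‖ ^ 2) = 1 ∧ (∀ j, (inner ℂ x (y j) : ℂ) = 0) ∧
      Real.sqrt (opVar B x) = ‖∑ j, (inner ℂ (B j x) (y j) : ℂ)‖ := by
  set s := Real.sqrt (opVar B x) with hs
  have hspos : 0 < s := Real.sqrt_pos.2 hv
  have hs2 : s ^ 2 = opVar B x := Real.sq_sqrt hv.le
  set c := fun j => (inner ℂ x (B j x) : ℂ) with hc
  refine ⟨fun j => ((s:ℂ))⁻¹ • (B j x - c j • x), ?_, ?_, ?_⟩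
  · have : ∀ j, ‖((s:ℂ))⁻¹ • (B j x - c j • x)‖ ^ 2 = s⁻¹ ^ 2 * ‖B j x - c j • x‖ ^ 2 := by
      intro j
      rw [norm_smul]
      simp [mul_pow, abs_of_pos hspos]
    simp_rw [this]
    rw [← Finset.mul_sum, ← opVar_eq_sum B hx, ← hs2]
    field_simp
  · intro j
    rw [inner_smul_right, inner_sub_right, inner_smul_right, inner_self_eq_norm_sq_to_K, hx]
    simp [hc]
  · have hterm : ∀ j, (inner ℂ (B j x) (((s:ℂ))⁻¹ • (B j x - c j • x)) : ℂ)
        = ((s:ℂ))⁻¹ * ((‖B j x‖ ^ 2 - ‖(c j)‖ ^ 2 : ℝ) : ℂ) := by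
      intro j
      rw [inner_smul_right, inner_sub_right, inner_self_eq_norm_sq_to_K, inner_sub_proj B x j]
      simp only [rclike_ofReal_complex, Complex.ofReal_pow, Complex.ofReal_sub]
      rfl
    simp_rw [hterm]
    rw [← Finset.mul_sum]
    have hsum : (∑ j, ((‖B j x‖ ^ 2 - ‖(c j)‖ ^ 2 : ℝ) : ℂ))
        = ((opVar B x : ℝ) : ℂ) := by
      rw [← Complex.ofReal_sum]
      norm_cast
      unfold opVar
      rw [Finset.sum_sub_distrib]
    rw [hsum, ← hs2, norm_mul, norm_inv, Complex.norm_real, Complex.norm_real,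
      Real.norm_of_nonneg hspos.le, Real.norm_of_nonneg (pow_pos hspos 2).le]
    field_simp

lemma inner_A_eq_inner_B {d : ℕ} (A : Fin d → H →L[ℂ] H) (z0 : Fin d → ℂ) (x : H)
    (y : Fin d → H) (h : ∀ j, (inner ℂ x (y j) : ℂ) = 0) :
    (∑ j, (inner ℂ (A j x) (y j) : ℂ))
      = ∑ j, (inner ℂ ((A j - z0 j • (1 : H →L[ℂ] H)) x) (y j) : ℂ) :=
  Finset.sum_congr rfl fun j _ => by
    simp [ContinuousLinearMap.sub_apply, inner_sub_left, inner_smul_left, h j]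

end aux

/-- with `z⁰` the minimizer of `‖A - zI‖` and `A⁰ = A - z⁰I`,
`0 ∈ W₀(A⁰)` iff `dist(A, ℂᵈI)` equals the supremum of `|⟨Ax, y⟩|` over unit vectors
`x ∈ H`, `y ∈ H^d` with `⟨x, yⱼ⟩ = 0` for all `j`. -/
theorem zero_mem_W0_iff_dist_eq_sup [Nontrivial H]
    {d : ℕ} (A : Fin d → H →L[ℂ] H) (z0 : Fin d → ℂ)
    (hz0 : ∀ z : Fin d → ℂ,
      opTupNorm (fun j => A j - z0 j • (1 : H →L[ℂ] H)) ≤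
        opTupNorm (fun j => A j - z j • (1 : H →L[ℂ] H))) :
    (0 : Fin d → ℂ) ∈ W0 (fun j => A j - z0 j • (1 : H →L[ℂ] H)) ↔
      (⨅ z : Fin d → ℂ, opTupNorm (fun j => A j - z j • (1 : H →L[ℂ] H))) =
        sSup {r : ℝ | ∃ (x : H) (y : Fin d → H), ‖x‖ = 1 ∧ (∑ j, ‖y j‖ ^ 2) = 1 ∧
          (∀ j, (inner ℂ x (y j) : ℂ) = 0) ∧
          r = ‖∑ j, (inner ℂ (A j x) (y j) : ℂ)‖} := by
  set B := fun j => A j - z0 j • (1 : H →L[ℂ] H) with hB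
  set M := opTupNorm B with hMdef
  set S := {r : ℝ | ∃ (x : H) (y : Fin d → H), ‖x‖ = 1 ∧ (∑ j, ‖y j‖ ^ 2) = 1 ∧
          (∀ j, (inner ℂ x (y j) : ℂ) = 0) ∧
          r = ‖∑ j, (inner ℂ (A j x) (y j) : ℂ)‖} with hSdef
  have hM0 : 0 ≤ M := Real.sqrt_nonneg _
  have hInf : (⨅ z : Fin d → ℂ, opTupNorm (fun j => A j - z j • (1 : H →L[ℂ] H))) = M := by
    refine le_antisymm (ciInf_le ⟨M, ?_⟩ z0) (le_ciInf hz0)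
    rintro r ⟨z, rfl⟩
    exact hz0 z
  have hSle : ∀ r ∈ S, r ≤ M := by
    rintro r ⟨x, y, hx, hy, hxy, rfl⟩
    rw [inner_A_eq_inner_B A z0 x y hxy]
    refine le_trans (abs_sum_inner_le_sqrt_opVar B hx hy hxy) ?_
    calc Real.sqrt (opVar B x) ≤ Real.sqrt (M ^ 2) :=
          Real.sqrt_le_sqrt (le_trans (opVar_le_sum_sq B x) (sum_sq_le_opTupNorm_sq B hx))
      _ = M := Real.sqrt_sq hM0
  by_cases hMz : M = 0
  · -- degenerate case : B = 0 on unit vectors; both sides hold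
    have hBz : ∀ (x : H), ‖x‖ = 1 → ∀ j, B j x = 0 := by
      intro x hx j
      have h1 := sum_sq_le_opTupNorm_sq B hx
      rw [← hMdef, hMz] at h1
      have h2 : ‖B j x‖ ^ 2 ≤ 0 := le_trans (Finset.single_le_sum
        (f := fun j => ‖B j x‖ ^ 2) (fun i _ => sq_nonneg _) (Finset.mem_univ j))
        (by simpa using h1)
      have : ‖B j x‖ = 0 := by nlinarith [sq_nonneg ‖B j x‖, norm_nonneg (B j x)]
      exact norm_eq_zero.1 this
    have hL : (0 : Fin d → ℂ) ∈ W0 B := by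
      obtain ⟨v, hv⟩ := exists_ne (0 : H)
      have hvn : ‖v‖ ≠ 0 := norm_ne_zero_iff.2 hv
      set e := ‖v‖⁻¹ • v with he
      have hen : ‖e‖ = 1 := by
        rw [he, norm_smul, norm_inv, norm_norm, inv_mul_cancel₀ hvn]
      refine ⟨fun _ => e, fun _ => hen, ?_, fun j => ?_⟩
      · have : Real.sqrt (∑ j, ‖B j e‖ ^ 2) = M := by
          simp [hBz e hen, hMz]
        exact tendsto_const_nhds.congr fun _ => this.symm
      · have : (inner ℂ e (B j e) : ℂ) = 0 := by simp [hBz e hen]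
        simpa [this] using tendsto_const_nhds
    have hR : (⨅ z : Fin d → ℂ, opTupNorm (fun j => A j - z j • (1 : H →L[ℂ] H))) = sSup S := by
      rw [hInf, hMz]
      refine (le_antisymm (Real.sSup_le (fun r hr => (hSle r hr).trans hMz.le) le_rfl)
        (Real.sSup_nonneg ?_)).symm
      rintro r ⟨x, y, hx, hy, hxy, rfl⟩
      exact norm_nonneg _
    exact iff_of_true hL hR
  · have hMpos : 0 < M := lt_of_le_of_ne hM0 (Ne.symm hMz)
    constructor
    · rintro ⟨x, hx1, hx2, hx3⟩
      have hc : ∀ j, Tendsto (fun n => (inner ℂ (x n) (B j (x n)) : ℂ)) atTop (𝓝 0) := by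
        intro j; simpa using hx3 j
      have hsumsq : Tendsto (fun n => ∑ j, ‖B j (x n)‖ ^ 2) atTop (𝓝 (M ^ 2)) := by
        have h := hx2.pow 2
        rw [show (fun n => Real.sqrt (∑ j, ‖B j (x n)‖ ^ 2) ^ 2)
            = fun n => ∑ j, ‖B j (x n)‖ ^ 2 from funext fun n =>
          Real.sq_sqrt (Finset.sum_nonneg fun _ _ => sq_nonneg _)] at h
        exact h
      have habs : Tendsto (fun n => ∑ j, ‖(inner ℂ (x n) (B j (x n)) : ℂ)‖ ^ 2)
          atTop (𝓝 0) := by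
        have h : ∀ j : Fin d, Tendsto
            (fun n => ‖(inner ℂ (x n) (B j (x n)) : ℂ)‖ ^ 2) atTop (𝓝 0) := by
          intro j
          have := ((hc j).norm).pow 2
          simpa using this
        simpa using tendsto_finset_sum Finset.univ (fun j _ => h j)
      have hvar : Tendsto (fun n => opVar B (x n)) atTop (𝓝 (M ^ 2)) := by
        have := hsumsq.sub habs
        simpa [opVar] using this
      have hev : ∀ᶠ n in atTop, 0 < opVar B (x n) :=
        hvar.eventually (eventually_gt_nhds (by positivity))
      have hmem : ∀ᶠ n in atTop, Real.sqrt (opVar B (x n)) ∈ S := by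
        refine hev.mono fun n hn => ?_
        obtain ⟨y, hy1, hy2, hy3⟩ := exists_y_of_pos_opVar B (hx1 n) hn
        exact ⟨x n, y, hx1 n, hy1, hy2, by
          rw [hy3, inner_A_eq_inner_B A z0 (x n) y hy2]⟩
      have hrt : Tendsto (fun n => Real.sqrt (opVar B (x n))) atTop (𝓝 M) := by
        have := hvar.sqrt
        rwa [Real.sqrt_sq hM0] at this
      have hbdd : BddAbove S := ⟨M, fun r hr => hSle r hr⟩
      have hle : sSup S ≤ M := Real.sSup_le (fun r hr => hSle r hr) hM0
      have hge : M ≤ sSup S :=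
        le_of_tendsto hrt (hmem.mono fun n hn => le_csSup hbdd hn)
      rw [hInf]
      exact (le_antisymm hle hge).symm
    · intro h
      have hsup : sSup S = M := by rw [← h, hInf]
      have hne : S.Nonempty := by
        by_contra hemp
        rw [Set.not_nonempty_iff_eq_empty] at hemp
        rw [hemp, Real.sSup_empty] at hsup
        exact hMz hsup.symm
      have hseq : ∀ n : ℕ, ∃ r ∈ S, M - 1 / (n + 1 : ℝ) < r := by
        intro n
        refine exists_lt_of_lt_csSup hne ?_
        rw [hsup]
        have : (0:ℝ) < 1 / (n + 1 : ℝ) := by positivity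
        linarith
      choose r hrS hrlt using hseq
      have hmem : ∀ n, ∃ (x : H) (y : Fin d → H), ‖x‖ = 1 ∧ (∑ j, ‖y j‖ ^ 2) = 1 ∧
          (∀ j, (inner ℂ x (y j) : ℂ) = 0) ∧
          r n = ‖∑ j, (inner ℂ (A j x) (y j) : ℂ)‖ := fun n => hrS n
      choose x y h1 h2 h3 h4 using hmem
      have hub : ∀ n, r n ≤ Real.sqrt (opVar B (x n)) := by
        intro n
        rw [h4 n, inner_A_eq_inner_B A z0 (x n) (y n) (h3 n)]
        exact abs_sum_inner_le_sqrt_opVar B (h1 n) (h2 n) (h3 n)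
      have hub2 : ∀ n, Real.sqrt (opVar B (x n)) ≤ Real.sqrt (∑ j, ‖B j (x n)‖ ^ 2) :=
        fun n => Real.sqrt_le_sqrt (opVar_le_sum_sq B (x n))
      have hub3 : ∀ n, Real.sqrt (∑ j, ‖B j (x n)‖ ^ 2) ≤ M := by
        intro n
        calc Real.sqrt (∑ j, ‖B j (x n)‖ ^ 2) ≤ Real.sqrt (M ^ 2) :=
              Real.sqrt_le_sqrt (sum_sq_le_opTupNorm_sq B (h1 n))
          _ = M := Real.sqrt_sq hM0
      have hlow : Tendsto (fun n : ℕ => M - 1 / (n + 1 : ℝ)) atTop (𝓝 M) := by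
        have := tendsto_const_nhds (x := M) (f := atTop (α := ℕ)) |>.sub
          tendsto_one_div_add_atTop_nhds_zero_nat
        simpa using this
      have hxt : Tendsto (fun n => Real.sqrt (∑ j, ‖B j (x n)‖ ^ 2)) atTop (𝓝 M) := by
        refine tendsto_of_tendsto_of_tendsto_of_le_of_le hlow tendsto_const_nhds
          (fun n => ?_) (fun n => hub3 n)
        exact le_trans (hrlt n).le (le_trans (hub n) (hub2 n))
      have hvt : Tendsto (fun n => Real.sqrt (opVar B (x n))) atTop (𝓝 M) := by
        refine tendsto_of_tendsto_of_tendsto_of_le_of_le hlow tendsto_const_nhds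
          (fun n => le_trans (hrlt n).le (hub n)) (fun n => le_trans (hub2 n) (hub3 n))
      have hvar2 : Tendsto (fun n => opVar B (x n)) atTop (𝓝 (M ^ 2)) := by
        have h := hvt.pow 2
        rw [show (fun n => Real.sqrt (opVar B (x n)) ^ 2) = fun n => opVar B (x n) from
          funext fun n => Real.sq_sqrt (opVar_nonneg B (h1 n))] at h
        exact h
      have hsum2 : Tendsto (fun n => ∑ j, ‖B j (x n)‖ ^ 2) atTop (𝓝 (M ^ 2)) := by
        have h := hxt.pow 2
        rw [show (fun n => Real.sqrt (∑ j, ‖B j (x n)‖ ^ 2) ^ 2)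
            = fun n => ∑ j, ‖B j (x n)‖ ^ 2 from funext fun n =>
          Real.sq_sqrt (Finset.sum_nonneg fun _ _ => sq_nonneg _)] at h
        exact h
      have hcs : Tendsto (fun n => ∑ j, ‖(inner ℂ (x n) (B j (x n)) : ℂ)‖ ^ 2)
          atTop (𝓝 0) := by
        have h := hsum2.sub hvar2
        have heq : (fun n => (∑ j, ‖B j (x n)‖ ^ 2) - opVar B (x n))
            = fun n => ∑ j, ‖(inner ℂ (x n) (B j (x n)) : ℂ)‖ ^ 2 := by
          funext n; simp [opVar]
        rw [heq] at h
        simpa using h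
      refine ⟨x, h1, hxt, fun j => ?_⟩
      have hj2 : Tendsto (fun n => ‖(inner ℂ (x n) (B j (x n)) : ℂ)‖ ^ 2)
          atTop (𝓝 0) := by
        refine squeeze_zero (fun n => sq_nonneg _) (fun n => ?_) hcs
        exact Finset.single_le_sum (f := fun i => ‖(inner ℂ (x n) (B i (x n)) : ℂ)‖ ^ 2)
          (fun i _ => sq_nonneg _) (Finset.mem_univ j)
      have hj1 : Tendsto (fun n => ‖(inner ℂ (x n) (B j (x n)) : ℂ)‖) atTop (𝓝 0) := by
        have h := hj2.sqrt
        rw [show (fun n => Real.sqrt (‖(inner ℂ (x n) (B j (x n)) : ℂ)‖ ^ 2))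
            = fun n => ‖(inner ℂ (x n) (B j (x n)) : ℂ)‖ from funext fun n =>
          Real.sqrt_sq (norm_nonneg _)] at h
        simpa using h
      have hj0 : Tendsto (fun n => (inner ℂ (x n) (B j (x n)) : ℂ)) atTop (𝓝 0) := by
        rw [tendsto_zero_iff_norm_tendsto_zero]
        simpa using hj1
      simpa using hj0
end

section
/- Let A be a tuple of bounded operators on a Hilbert space H, with unique z⁰ minimizing ‖A − zI‖ and A⁰ = A − z⁰I. If the joint maximal numerical range W₀(A⁰) is convex, then sup_{‖x‖=1} var_x(A) = dist(A, C^d I)². -/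
open Filter Topology
open ContinuousLinearMap

variable {H : Type*} [NormedAddCommGroup H] [InnerProductSpace ℂ H] [CompleteSpace H]

set_option linter.unusedSectionVars false
set_option linter.unusedTactic false

instance piLpComplete {d : ℕ} : CompleteSpace (PiLp 2 fun _ : Fin d => H) :=
  inferInstance

noncomputable def tupOp {d : ℕ} (A : Fin d → H →L[ℂ] H) :
    H →L[ℂ] PiLp 2 (fun _ : Fin d => H) :=
  ((PiLp.continuousLinearEquiv 2 ℂ (fun _ : Fin d => H)).symm :
      ((Fin d) → H) →L[ℂ] PiLp 2 (fun _ : Fin d => H)).comp (ContinuousLinearMap.pi A)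

lemma tupOp_apply {d : ℕ} (A : Fin d → H →L[ℂ] H) (x : H) (j : Fin d) :
    tupOp A x j = A j x := rfl

lemma adjoint_comp_tupOp {d : ℕ} (A : Fin d → H →L[ℂ] H) :
    (ContinuousLinearMap.adjoint (tupOp A)).comp (tupOp A) =
      ∑ j, ContinuousLinearMap.adjoint (A j) * A j := by
  ext x
  apply ext_inner_left ℂ
  intro v
  rw [ContinuousLinearMap.comp_apply, adjoint_inner_right, PiLp.inner_apply,
    ContinuousLinearMap.sum_apply, inner_sum]
  exact Finset.sum_congr rfl fun j _ => by
    rw [ContinuousLinearMap.mul_apply, adjoint_inner_right, tupOp_apply, tupOp_apply]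

lemma norm_tupOp_sq {d : ℕ} (A : Fin d → H →L[ℂ] H) (x : H) :
    ‖tupOp A x‖ ^ 2 = ∑ j, ‖A j x‖ ^ 2 := by
  rw [PiLp.norm_sq_eq_of_L2]; rfl

lemma opTupNorm_eq {d : ℕ} (A : Fin d → H →L[ℂ] H) : opTupNorm A = ‖tupOp A‖ := by
  rw [opTupNorm, ← adjoint_comp_tupOp, ContinuousLinearMap.norm_adjoint_comp_self]
  exact Real.sqrt_mul_self (norm_nonneg _)

lemma opTupNorm_nonneg {d : ℕ} (A : Fin d → H →L[ℂ] H) : 0 ≤ opTupNorm A :=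
  Real.sqrt_nonneg _

lemma sqrt_sum_eq {d : ℕ} (A : Fin d → H →L[ℂ] H) (x : H) :
    Real.sqrt (∑ j, ‖A j x‖ ^ 2) = ‖tupOp A x‖ := by
  rw [← norm_tupOp_sq, Real.sqrt_sq (norm_nonneg _)]

/-- Existence of near-norm unit vectors. -/
lemma exists_unit_lt_norm [Nontrivial H] {K : Type*} [NormedAddCommGroup K]
    [NormedSpace ℂ K] (B : H →L[ℂ] K) {r : ℝ} (hr : r < ‖B‖) :
    ∃ x : H, ‖x‖ = 1 ∧ r < ‖B x‖ := by
  rcases lt_or_ge r 0 with h | h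
  · obtain ⟨y, hy⟩ := exists_ne (0 : H)
    refine ⟨‖y‖⁻¹ • y, ?_, lt_of_lt_of_le h (norm_nonneg _)⟩
    rw [norm_smul, norm_inv, norm_norm, inv_mul_cancel₀ (norm_ne_zero_iff.mpr hy)]
  · obtain ⟨x, hx1, hx2⟩ := B.exists_lt_apply_of_lt_opNorm hr
    have hxne : x ≠ 0 := by
      rintro rfl; simp at hx2; exact absurd hx2 (not_lt.mpr h)
    have hxn : (0:ℝ) < ‖x‖ := norm_pos_iff.mpr hxne
    have h1 : (1:ℝ) ≤ ‖x‖⁻¹ := by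
      rw [le_inv_comm₀ one_pos hxn]; exact le_of_lt (by simpa using hx1)
    refine ⟨((‖x‖:ℂ))⁻¹ • x, ?_, ?_⟩
    · rw [norm_smul, norm_inv, Complex.norm_real, norm_norm, inv_mul_cancel₀ hxn.ne']
    · rw [map_smul, norm_smul, norm_inv, Complex.norm_real, norm_norm]
      calc r < ‖B x‖ := hx2
        _ ≤ ‖x‖⁻¹ * ‖B x‖ := le_mul_of_one_le_left (norm_nonneg _) h1

/-- variance shift invariance -/
lemma opVar_shift {d : ℕ} (A : Fin d → H →L[ℂ] H) (z : Fin d → ℂ) (x : H)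
    (hx : ‖x‖ = 1) :
    opVar (fun j => A j - z j • (1 : H →L[ℂ] H)) x = opVar A x := by
  unfold opVar
  rw [← Finset.sum_sub_distrib, ← Finset.sum_sub_distrib]
  refine Finset.sum_congr rfl fun j _ => ?_
  have happ : (A j - z j • (1 : H →L[ℂ] H)) x = A j x - z j • x := by
    simp
  have hip : (inner ℂ x (A j x - z j • x) : ℂ)
      = inner ℂ x (A j x) - z j := by
    rw [inner_sub_right, inner_smul_right, inner_self_eq_norm_sq_to_K, hx]
    push_cast; ring
  rw [happ, hip]
  have e1 : ‖A j x - z j • x‖ ^ 2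
      = ‖A j x‖ ^ 2 - 2 * Complex.re (inner ℂ (A j x) (z j • x)) + ‖z j • x‖ ^ 2 :=
    norm_sub_sq (𝕜 := ℂ) _ _
  have e2 : ‖(inner ℂ x (A j x) : ℂ) - z j‖ ^ 2
      = ‖(inner ℂ x (A j x) : ℂ)‖ ^ 2
        - 2 * Complex.re (inner ℂ ((inner ℂ x (A j x) : ℂ)) (z j)) + ‖z j‖ ^ 2 := by
    have := norm_sub_sq (𝕜 := ℂ) (E := ℂ) (inner ℂ x (A j x) : ℂ) (z j)
    simpa using this
  have e3 : (inner ℂ (A j x) (z j • x) : ℂ) = (starRingEnd ℂ (inner ℂ x (A j x))) * z j := by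
    rw [inner_smul_right, ← inner_conj_symm]; ring
  have e4 : (inner ℂ ((inner ℂ x (A j x) : ℂ)) (z j) : ℂ)
      = (starRingEnd ℂ (inner ℂ x (A j x))) * z j := by
    simp [RCLike.inner_apply]
    ring
  have e5 : ‖z j • x‖ ^ 2 = ‖z j‖ ^ 2 := by
    rw [norm_smul, hx, mul_one]
  rw [e1, e2, e3, e4, e5]
  ring

lemma exists_subseq_W0 {d : ℕ} (A : Fin d → H →L[ℂ] H) (x : ℕ → H)
    (hx : ∀ n, ‖x n‖ = 1)
    (hlim : Tendsto (fun n => ‖tupOp A (x n)‖) atTop (𝓝 (opTupNorm A))) :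
    ∃ lam ∈ W0 A, ∃ φ : ℕ → ℕ, StrictMono φ ∧
      Tendsto (fun n => (fun j => (inner ℂ (x (φ n)) (A j (x (φ n))) : ℂ)))
        atTop (𝓝 lam) := by
  set C : ℝ := ∑ j, ‖A j‖ with hC
  have hC0 : 0 ≤ C := Finset.sum_nonneg fun j _ => norm_nonneg _
  set lamSeq : ℕ → (Fin d → ℂ) := fun n j => inner ℂ (x n) (A j (x n)) with hlamSeq
  have hmem : ∀ n, lamSeq n ∈ Metric.closedBall (0 : Fin d → ℂ) C := by
    intro n
    rw [Metric.mem_closedBall, dist_zero_right, pi_norm_le_iff_of_nonneg hC0]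
    intro j
    have h1 : ‖A j (x n)‖ ≤ ‖A j‖ := by
      calc ‖A j (x n)‖ ≤ ‖A j‖ * ‖x n‖ := (A j).le_opNorm _
        _ = ‖A j‖ := by rw [hx n, mul_one]
    calc ‖lamSeq n j‖ ≤ ‖x n‖ * ‖A j (x n)‖ := norm_inner_le_norm _ _
      _ = ‖A j (x n)‖ := by rw [hx n, one_mul]
      _ ≤ ‖A j‖ := h1
      _ ≤ C := Finset.single_le_sum (fun i _ => norm_nonneg (A i)) (Finset.mem_univ j)
  obtain ⟨a, -, φ, hφ, hconv⟩ :=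
    (isCompact_closedBall (0 : Fin d → ℂ) C).tendsto_subseq hmem
  refine ⟨a, ⟨fun n => x (φ n), fun n => hx _, ?_, ?_⟩, φ, hφ, hconv⟩
  · have h2 : Tendsto (fun n => ‖tupOp A (x (φ n))‖) atTop (𝓝 (opTupNorm A)) :=
      hlim.comp hφ.tendsto_atTop
    have h3 : (fun n => Real.sqrt (∑ j, ‖A j (x (φ n))‖ ^ 2))
        = fun n => ‖tupOp A (x (φ n))‖ := funext fun n => sqrt_sum_eq A _
    rw [h3]; exact h2
  · intro j
    exact (tendsto_pi_nhds.mp hconv) j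

lemma exists_norming_seq [Nontrivial H] {d : ℕ} (A : Fin d → H →L[ℂ] H) :
    ∃ x : ℕ → H, (∀ n, ‖x n‖ = 1) ∧
      Tendsto (fun n => ‖tupOp A (x n)‖) atTop (𝓝 (opTupNorm A)) := by
  have h : ∀ n : ℕ, ∃ y : H, ‖y‖ = 1 ∧ ‖tupOp A‖ - 1/(n+1) < ‖tupOp A y‖ := fun n =>
    exists_unit_lt_norm (tupOp A) (sub_lt_self _ (by positivity))
  choose x hx1 hx2 using h
  refine ⟨x, hx1, ?_⟩
  rw [opTupNorm_eq]
  have hupper : ∀ n, ‖tupOp A (x n)‖ ≤ ‖tupOp A‖ := fun n => by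
    calc ‖tupOp A (x n)‖ ≤ ‖tupOp A‖ * ‖x n‖ := (tupOp A).le_opNorm _
      _ = ‖tupOp A‖ := by rw [hx1 n, mul_one]
  have hlower : Tendsto (fun n : ℕ => ‖tupOp A‖ - 1/(n+1)) atTop (𝓝 ‖tupOp A‖) := by
    have h0 := tendsto_one_div_add_atTop_nhds_zero_nat (𝕜 := ℝ)
    have := (tendsto_const_nhds (x := ‖tupOp A‖) (f := atTop (α := ℕ))).sub h0
    simpa using this
  exact tendsto_of_tendsto_of_tendsto_of_le_of_le hlower tendsto_const_nhds
    (fun n => (hx2 n).le) hupper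

lemma clm_repr {d : ℕ} (f : (Fin d → ℂ) →L[ℝ] ℝ) :
    ∃ μ : Fin d → ℂ, ∀ lam : Fin d → ℂ,
      f lam = ∑ j, ((starRingEnd ℂ) (μ j) * lam j).re := by
  refine ⟨fun j => Complex.mk (f (Pi.single j 1)) (f (Pi.single j Complex.I)),
    fun lam => ?_⟩
  conv_lhs => rw [← Finset.univ_sum_single lam, map_sum]
  refine Finset.sum_congr rfl fun j _ => ?_
  have hdec : Pi.single j (lam j)
      = (lam j).re • (Pi.single j (1:ℂ) : Fin d → ℂ)
        + (lam j).im • (Pi.single j Complex.I : Fin d → ℂ) := by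
    rw [← Pi.single_smul, ← Pi.single_smul, ← Pi.single_add]
    congr 1
    rw [Complex.real_smul, Complex.real_smul, mul_one, Complex.re_add_im]
  rw [hdec, map_add, map_smul, map_smul]
  simp only [smul_eq_mul, Complex.mul_re, Complex.conj_re, Complex.conj_im]
  ring

set_option maxHeartbeats 4000000 in
lemma zero_mem_closure_W0 [Nontrivial H] {d : ℕ} (A : Fin d → H →L[ℂ] H) (z0 : Fin d → ℂ)
    (hz0 : ∀ z : Fin d → ℂ,
      opTupNorm (fun j => A j - z0 j • (1 : H →L[ℂ] H)) ≤
        opTupNorm (fun j => A j - z j • (1 : H →L[ℂ] H)))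
    (hconv : Convex ℝ (W0 (fun j => A j - z0 j • (1 : H →L[ℂ] H)))) :
    (0 : Fin d → ℂ) ∈ closure (W0 (fun j => A j - z0 j • (1 : H →L[ℂ] H))) := by
  set A0 : Fin d → H →L[ℂ] H := fun j => A j - z0 j • 1 with hA0
  by_contra h0
  obtain ⟨f, u, hfu, hsep⟩ :=
    geometric_hahn_banach_point_closed hconv.closure isClosed_closure h0
  rw [map_zero] at hfu
  have hW : ∀ lam ∈ W0 A0, u < f lam := fun lam hl => hsep lam (subset_closure hl)
  obtain ⟨μ, hμ⟩ := clm_repr f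
  set M := opTupNorm A0 with hMdef
  have hM : M = ‖tupOp A0‖ := opTupNorm_eq A0
  have hM0 : 0 ≤ M := opTupNorm_nonneg A0
  -- uniform positivity near the norming set
  have claim : ∃ ε > 0, ∀ x : H, ‖x‖ = 1 → M^2 - ε < ‖tupOp A0 x‖^2 →
      u/2 ≤ f (fun j => (inner ℂ x (A0 j x) : ℂ)) := by
    by_contra hcl
    push_neg at hcl
    have hseq : ∀ n : ℕ, ∃ x : H, ‖x‖ = 1 ∧ M^2 - 1/(n+1) < ‖tupOp A0 x‖^2 ∧
        f (fun j => (inner ℂ x (A0 j x) : ℂ)) < u/2 := fun n => by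
      obtain ⟨x, hx1, hx2, hx3⟩ := hcl (1/(n+1)) (by positivity)
      exact ⟨x, hx1, hx2, hx3⟩
    choose x hx1 hx2 hx3 using hseq
    have hub : ∀ n, ‖tupOp A0 (x n)‖ ≤ M := fun n => by
      rw [hM]
      calc ‖tupOp A0 (x n)‖ ≤ ‖tupOp A0‖ * ‖x n‖ := (tupOp A0).le_opNorm _
        _ = ‖tupOp A0‖ := by rw [hx1 n, mul_one]
    have hsq : Tendsto (fun n => ‖tupOp A0 (x n)‖^2) atTop (𝓝 (M^2)) := by
      have hl : Tendsto (fun n : ℕ => M^2 - 1/(n+1)) atTop (𝓝 (M^2)) := by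
        have := (tendsto_const_nhds (x := M^2) (f := atTop (α := ℕ))).sub
          (tendsto_one_div_add_atTop_nhds_zero_nat (𝕜 := ℝ))
        simpa using this
      exact tendsto_of_tendsto_of_tendsto_of_le_of_le hl tendsto_const_nhds
        (fun n => (hx2 n).le)
        (fun n => pow_le_pow_left₀ (norm_nonneg _) (hub n) 2)
    have hn : Tendsto (fun n => ‖tupOp A0 (x n)‖) atTop (𝓝 M) := by
      have h2 := (Real.continuous_sqrt.tendsto (M ^ 2)).comp hsq
      rw [Real.sqrt_sq hM0] at h2
      have h3 : (Real.sqrt ∘ fun n => ‖tupOp A0 (x n)‖ ^ 2)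
          = fun n => ‖tupOp A0 (x n)‖ := funext fun n => Real.sqrt_sq (norm_nonneg _)
      rwa [h3] at h2
    obtain ⟨lam, hlamW, φ, hφ, hconv2⟩ := exists_subseq_W0 A0 x hx1 hn
    have hflam : Tendsto (fun n => f (fun j => (inner ℂ (x (φ n)) (A0 j (x (φ n))) : ℂ)))
        atTop (𝓝 (f lam)) := (f.continuous.tendsto lam).comp hconv2
    have h4 : f lam ≤ u/2 :=
      le_of_tendsto hflam (Eventually.of_forall fun n => (hx3 (φ n)).le)
    have h5 := hW lam hlamW
    linarith
  obtain ⟨ε, hε, hclaim⟩ := claim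
  set S : ℝ := ∑ j, ‖μ j‖^2 with hS
  have hS0 : 0 ≤ S := Finset.sum_nonneg fun j _ => sq_nonneg _
  set F : ℝ := ‖f‖ with hF
  have hF0 : 0 ≤ F := norm_nonneg _
  set t : ℝ := min (u / (2*(S+1))) (min 1 (ε / (2*(2*F*M + S + 1)))) with ht
  have ht0 : 0 < t := by
    refine lt_min (by positivity) (lt_min one_pos (by positivity))
  have ht1 : t ≤ 1 := le_trans (min_le_right _ _) (min_le_left _ _)
  have htu : t ≤ u / (2*(S+1)) := min_le_left _ _
  have htε : t ≤ ε / (2*(2*F*M + S + 1)) := le_trans (min_le_right _ _) (min_le_right _ _)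
  set c : ℝ := min (t*u/2) (ε/2) with hc
  have hc0 : 0 < c := lt_min (by positivity) (by positivity)
  set A' : Fin d → H →L[ℂ] H := fun j => A j - (z0 j + (t:ℂ) * μ j) • 1 with hA'
  have hA'eq : ∀ j (y : H), A' j y = A0 j y - ((t:ℂ) * μ j) • y := by
    intro j y
    simp [hA', hA0, add_smul, sub_sub]
  -- expansion of the perturbed norm
  have hexp : ∀ x : H, ‖x‖ = 1 → ‖tupOp A' x‖^2 = ‖tupOp A0 x‖^2
      - 2*t*(f (fun j => (inner ℂ x (A0 j x) : ℂ))) + t^2 * S := by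
    intro x hx
    rw [norm_tupOp_sq, norm_tupOp_sq, hμ, hS, Finset.mul_sum, Finset.mul_sum,
      ← Finset.sum_sub_distrib, ← Finset.sum_add_distrib]
    refine Finset.sum_congr rfl fun j _ => ?_
    rw [hA'eq j x, norm_sub_sq (𝕜 := ℂ)]
    have h1 : (inner ℂ (A0 j x) (((t:ℂ) * μ j) • x) : ℂ)
        = (t:ℂ) * μ j * (starRingEnd ℂ (inner ℂ x (A0 j x))) := by
      rw [inner_smul_right, ← inner_conj_symm]
    have h2 : ‖((t:ℂ) * μ j) • x‖^2 = t^2 * ‖μ j‖^2 := by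
      rw [norm_smul, hx, mul_one, norm_mul, mul_pow, Complex.norm_real,
        Real.norm_eq_abs, sq_abs]
    have h3 : ((t:ℂ) * μ j * (starRingEnd ℂ (inner ℂ x (A0 j x)))).re
        = t * ((starRingEnd ℂ (μ j)) * (inner ℂ x (A0 j x) : ℂ)).re := by
      rw [mul_assoc, Complex.re_ofReal_mul]
      congr 1
      rw [show (starRingEnd ℂ (μ j)) * (inner ℂ x (A0 j x) : ℂ)
          = starRingEnd ℂ (μ j * (starRingEnd ℂ (inner ℂ x (A0 j x)))) by
        rw [map_mul, Complex.conj_conj], Complex.conj_re]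
    rw [h1, h2]
    simp only [RCLike.re_to_complex]
    rw [h3]
    ring
  -- uniform strict bound for the perturbed tuple
  have hbound : ∀ x : H, ‖x‖ = 1 → ‖tupOp A' x‖^2 ≤ M^2 - c := by
    intro x hx
    have hxNlin : ‖tupOp A0 x‖ ≤ M := by
      rw [hM]
      calc ‖tupOp A0 x‖ ≤ ‖tupOp A0‖ * ‖x‖ := (tupOp A0).le_opNorm _
        _ = ‖tupOp A0‖ := by rw [hx, mul_one]
    have hxN : ‖tupOp A0 x‖^2 ≤ M^2 := pow_le_pow_left₀ (norm_nonneg _) hxNlin 2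
    have hfb : |f (fun j => (inner ℂ x (A0 j x) : ℂ))| ≤ F * M := by
      have h1 : ‖(fun j => (inner ℂ x (A0 j x) : ℂ))‖ ≤ M := by
        rw [pi_norm_le_iff_of_nonneg hM0]
        intro j
        have ha : ‖A0 j x‖^2 ≤ ‖tupOp A0 x‖^2 := by
          rw [norm_tupOp_sq]
          exact Finset.single_le_sum (fun i _ => sq_nonneg ‖A0 i x‖) (Finset.mem_univ j)
        have hb : ‖A0 j x‖ ≤ ‖tupOp A0 x‖ := by
          have := Real.sqrt_le_sqrt ha
          rwa [Real.sqrt_sq (norm_nonneg _), Real.sqrt_sq (norm_nonneg _)] at this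
        calc ‖(inner ℂ x (A0 j x) : ℂ)‖ ≤ ‖x‖ * ‖A0 j x‖ := norm_inner_le_norm _ _
          _ = ‖A0 j x‖ := by rw [hx, one_mul]
          _ ≤ ‖tupOp A0 x‖ := hb
          _ ≤ M := hxNlin
      calc |f (fun j => (inner ℂ x (A0 j x) : ℂ))|
          = ‖f (fun j => (inner ℂ x (A0 j x) : ℂ))‖ := (Real.norm_eq_abs _).symm
        _ ≤ ‖f‖ * ‖(fun j => (inner ℂ x (A0 j x) : ℂ))‖ := f.le_opNorm _
        _ ≤ F * M := mul_le_mul_of_nonneg_left h1 hF0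
    rw [hexp x hx]
    rcases le_or_gt (‖tupOp A0 x‖^2) (M^2 - ε) with hcase | hcase
    · -- far from the norming set
      have hK : t * (2*F*M + S + 1) ≤ ε/2 := by
        calc t * (2*F*M + S + 1)
            ≤ (ε / (2*(2*F*M + S + 1))) * (2*F*M + S + 1) :=
              mul_le_mul_of_nonneg_right htε (by positivity)
          _ = ε/2 := by field_simp
      have ht2 : t^2*S ≤ t*S := by
        have h9 : t^2 ≤ t := by nlinarith [mul_le_mul_of_nonneg_left ht1 ht0.le]
        exact mul_le_mul_of_nonneg_right h9 hS0
      have hL := abs_le.mp hfb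
      have hcε : c ≤ ε/2 := min_le_right _ _
      nlinarith [mul_le_mul_of_nonneg_left hL.1 ht0.le]
    · -- close to the norming set
      have hLu := hclaim x hx hcase
      have htu' : t * (2*(S+1)) ≤ u := by
        have h9 := mul_le_mul_of_nonneg_right htu (show (0:ℝ) ≤ 2*(S+1) by positivity)
        rwa [div_mul_cancel₀ _ (show (2*(S+1):ℝ) ≠ 0 by positivity)] at h9
      have hA1 : t*(S+1) ≤ u/2 := by nlinarith
      have h2 : t^2*S ≤ t*u/2 := by
        nlinarith [mul_le_mul_of_nonneg_left hA1 ht0.le, sq_nonneg t]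
      have hcu : c ≤ t*u/2 := min_le_left _ _
      nlinarith [mul_le_mul_of_nonneg_left hLu ht0.le]
  -- conclude a strict decrease of the norm, contradiction
  obtain ⟨x0, hx0⟩ : ∃ x0 : H, ‖x0‖ = 1 := by
    obtain ⟨y, hy⟩ := exists_ne (0 : H)
    exact ⟨‖y‖⁻¹ • y,
      by rw [norm_smul, norm_inv, norm_norm, inv_mul_cancel₀ (norm_ne_zero_iff.mpr hy)]⟩
  have hMc : 0 ≤ M^2 - c := le_trans (sq_nonneg _) (hbound x0 hx0)
  have hnorm : ‖tupOp A'‖ ≤ Real.sqrt (M^2 - c) := by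
    apply ContinuousLinearMap.opNorm_le_bound _ (Real.sqrt_nonneg _)
    intro x
    rcases eq_or_ne x 0 with rfl | hxz
    · simp
    · have hxn : (0:ℝ) < ‖x‖ := norm_pos_iff.mpr hxz
      set v : H := ((‖x‖:ℂ))⁻¹ • x with hv
      have hv1 : ‖v‖ = 1 := by
        rw [hv, norm_smul, norm_inv, Complex.norm_real, norm_norm,
          inv_mul_cancel₀ hxn.ne']
      have hxv : x = (‖x‖:ℂ) • v := by
        rw [hv, smul_smul, mul_inv_cancel₀ (by exact_mod_cast hxn.ne'), one_smul]
      have heq : ‖tupOp A' x‖ = ‖x‖ * ‖tupOp A' v‖ := by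
        calc ‖tupOp A' x‖ = ‖tupOp A' ((‖x‖:ℂ) • v)‖ := by rw [← hxv]
          _ = ‖x‖ * ‖tupOp A' v‖ := by
              rw [map_smul, norm_smul, Complex.norm_real, norm_norm]
      have hb : ‖tupOp A' v‖ ≤ Real.sqrt (M^2 - c) := by
        calc ‖tupOp A' v‖ = Real.sqrt (‖tupOp A' v‖^2) :=
              (Real.sqrt_sq (norm_nonneg _)).symm
          _ ≤ Real.sqrt (M^2 - c) := Real.sqrt_le_sqrt (hbound v hv1)
      calc ‖tupOp A' x‖ = ‖x‖ * ‖tupOp A' v‖ := heq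
        _ ≤ ‖x‖ * Real.sqrt (M^2 - c) := mul_le_mul_of_nonneg_left hb hxn.le
        _ = Real.sqrt (M^2 - c) * ‖x‖ := mul_comm _ _
  have hlt : Real.sqrt (M^2 - c) < M := by
    have hM2 : 0 < M := by nlinarith
    calc Real.sqrt (M^2 - c) < Real.sqrt (M^2) := Real.sqrt_lt_sqrt hMc (by linarith)
      _ = M := Real.sqrt_sq hM0
  have hcontra := hz0 (fun j => z0 j + (t:ℂ) * μ j)
  have hfinal : M ≤ ‖tupOp A'‖ := by
    rw [← opTupNorm_eq]
    exact hcontra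
  linarith

set_option maxHeartbeats 2000000 in
/-- if `z⁰` minimizes `‖A - zI‖` and the joint maximal numerical range
`W₀(A⁰)` of `A⁰ = A - z⁰I` is convex, then `sup_{‖x‖=1} var_x(A) = dist(A, ℂᵈI)²`. -/
theorem dist_formula_of_W0_convex [Nontrivial H]
    {d : ℕ} (A : Fin d → H →L[ℂ] H) (z0 : Fin d → ℂ)
    (hz0 : ∀ z : Fin d → ℂ,
      opTupNorm (fun j => A j - z0 j • (1 : H →L[ℂ] H)) ≤
        opTupNorm (fun j => A j - z j • (1 : H →L[ℂ] H)))
    (hconv : Convex ℝ (W0 (fun j => A j - z0 j • (1 : H →L[ℂ] H)))) :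
    sSup {v : ℝ | ∃ x : H, ‖x‖ = 1 ∧ v = opVar A x} =
      (⨅ z : Fin d → ℂ, opTupNorm (fun j => A j - z j • (1 : H →L[ℂ] H))) ^ 2 := by
  set A0 : Fin d → H →L[ℂ] H := fun j => A j - z0 j • 1 with hA0
  set M := opTupNorm A0 with hMdef
  have hM : M = ‖tupOp A0‖ := opTupNorm_eq A0
  have hM0 : 0 ≤ M := opTupNorm_nonneg A0
  have hinf : (⨅ z : Fin d → ℂ, opTupNorm (fun j => A j - z j • (1 : H →L[ℂ] H))) = M := by
    apply le_antisymm
    · exact ciInf_le ⟨0, fun r hr => by obtain ⟨z, rfl⟩ := hr; exact opTupNorm_nonneg _⟩ z0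
    · exact le_ciInf hz0
  rw [hinf]
  set Sv := {v : ℝ | ∃ x : H, ‖x‖ = 1 ∧ v = opVar A x} with hSv
  have hub : ∀ v ∈ Sv, v ≤ M^2 := by
    rintro v ⟨x, hx, rfl⟩
    rw [← opVar_shift A z0 x hx]
    have h1 : opVar A0 x ≤ ∑ j, ‖A0 j x‖^2 := by
      unfold opVar
      have h0 : 0 ≤ ∑ j, ‖(inner ℂ x (A0 j x) : ℂ)‖^2 :=
        Finset.sum_nonneg fun j _ => sq_nonneg _
      linarith
    have h2 : ∑ j, ‖A0 j x‖^2 ≤ M^2 := by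
      rw [← norm_tupOp_sq]
      apply pow_le_pow_left₀ (norm_nonneg _) _ 2
      rw [hM]
      calc ‖tupOp A0 x‖ ≤ ‖tupOp A0‖ * ‖x‖ := (tupOp A0).le_opNorm _
        _ = ‖tupOp A0‖ := by rw [hx, mul_one]
    linarith
  have hne : Sv.Nonempty := by
    obtain ⟨y, hy⟩ := exists_ne (0 : H)
    refine ⟨opVar A (‖y‖⁻¹ • y), ⟨‖y‖⁻¹ • y, ?_, rfl⟩⟩
    rw [norm_smul, norm_inv, norm_norm, inv_mul_cancel₀ (norm_ne_zero_iff.mpr hy)]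
  have hbdd : BddAbove Sv := ⟨M^2, hub⟩
  apply le_antisymm
  · exact csSup_le hne hub
  · refine le_of_forall_lt fun r hr => ?_
    have h0cl := zero_mem_closure_W0 A z0 hz0 hconv
    set δ := M^2 - r with hδ
    have hδ0 : 0 < δ := by simp only [hδ]; linarith
    set ρ := Real.sqrt (δ/(2*(d+1))) with hρ
    have hρ0 : 0 < ρ := Real.sqrt_pos.mpr (by positivity)
    obtain ⟨lam, hlamW, hlamd⟩ := Metric.mem_closure_iff.mp h0cl ρ hρ0
    have hld : ‖lam‖ < ρ := by rwa [dist_zero_left] at hlamd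
    have hlamsmall : (∑ j, ‖lam j‖^2) ≤ δ/2 := by
      have hone : ∀ j : Fin d, ‖lam j‖^2 ≤ δ/(2*(d+1)) := by
        intro j
        have h1 : ‖lam j‖ ≤ ‖lam‖ := norm_le_pi_norm lam j
        have h2 : ‖lam j‖ < ρ := lt_of_le_of_lt h1 hld
        have h3 : ‖lam j‖^2 < ρ^2 := by nlinarith [norm_nonneg (lam j)]
        have h4 : ρ^2 = δ/(2*(d+1)) := Real.sq_sqrt (by positivity)
        linarith
      calc (∑ j, ‖lam j‖^2) ≤ ∑ _j : Fin d, δ/(2*(d+1)) :=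
            Finset.sum_le_sum fun j _ => hone j
        _ = d * (δ/(2*(d+1))) := by rw [Finset.sum_const, Finset.card_univ,
            Fintype.card_fin, nsmul_eq_mul]
        _ ≤ δ/2 := by
            have h5 : (d:ℝ) / (2*((d:ℝ)+1)) ≤ 1/2 := by
              rw [div_le_div_iff₀ (by positivity) (by norm_num)]
              nlinarith [Nat.cast_nonneg (α := ℝ) d]
            calc (d:ℝ) * (δ/(2*((d:ℝ)+1))) = δ * ((d:ℝ)/(2*((d:ℝ)+1))) := by ring
              _ ≤ δ * (1/2) := mul_le_mul_of_nonneg_left h5 hδ0.le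
              _ = δ/2 := by ring
    obtain ⟨x, hx1, hsq, hinn⟩ := hlamW
    -- limit of the variances
    have hA0sum : ∀ n, (∑ j, ‖A0 j (x n)‖^2)
        = (Real.sqrt (∑ j, ‖A0 j (x n)‖^2))^2 :=
      fun n => (Real.sq_sqrt (Finset.sum_nonneg fun j _ => sq_nonneg _)).symm
    have h1 : Tendsto (fun n => ∑ j, ‖A0 j (x n)‖^2) atTop (𝓝 (M^2)) := by
      have := hsq.pow 2
      simp only [← hA0sum] at this
      exact (hsq.pow 2).congr fun n => (hA0sum n).symm
    have h2 : Tendsto (fun n => ∑ j, ‖(inner ℂ (x n) (A0 j (x n)) : ℂ)‖^2)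
        atTop (𝓝 (∑ j, ‖lam j‖^2)) := by
      apply tendsto_finset_sum
      intro j _
      exact ((continuous_norm.tendsto _).comp (hinn j)).pow 2
    have hvar : Tendsto (fun n => opVar A0 (x n)) atTop
        (𝓝 (M^2 - ∑ j, ‖lam j‖^2)) := h1.sub h2
    have hrL : r < M^2 - ∑ j, ‖lam j‖^2 := by
      have : M^2 - ∑ j, ‖lam j‖^2 ≥ M^2 - δ/2 := by linarith
      simp only [hδ] at this ⊢
      linarith
    obtain ⟨n, hn⟩ := (hvar.eventually (eventually_gt_nhds hrL)).exists
    have hmem : opVar A0 (x n) ∈ Sv := by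
      rw [opVar_shift A z0 (x n) (hx1 n)]
      exact ⟨x n, hx1 n, rfl⟩
    exact lt_of_lt_of_le hn (le_csSup hbdd hmem)
end
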